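/- Let w_j^n be a coarse-grid numerical solution and u_i^m a fine-grid numerical solution with w_j^0 = u_{jr}^0, where both satisfy the contraction |x_i^{n+1} - x_i^n| ≤ (1/2)|x_{i+1}^n - x_{i-1}^n|, M = Nr, and |u_i^0 - u_{i+1}^0| ≤ ε/3^M for all i. Then |w_j^N - u_{jr}^M| ≤ ε. -/

import Mathlib

private lemma osc_bound (x : ℤ → ℕ → ℝ) (δ : ℝ)
    (hcfl : ∀ i n, |x i (n+1) - x i n| ≤ 1/2 * |x (i+1) n - x (i-1) n|)
    (h0 : ∀ i, |x i 0 - x (i+1) 0| ≤ δ) :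
    ∀ n i, |x i n - x (i+1) n| ≤ 3 ^ n * δ := by
  intro n
  induction n with
  | zero => intro i; simpa using h0 i
  | succ n ih =>
    intro i
    have hstep : ∀ j : ℤ, |x j (n+1) - x j n| ≤ 3 ^ n * δ := by
      intro j
      have h1 := hcfl j n
      have h2 : |x (j+1) n - x (j-1) n| ≤ 3 ^ n * δ + 3 ^ n * δ := by
        have ha := ih (j-1)
        have hb := ih j
        rw [sub_add_cancel] at ha
        calc |x (j+1) n - x (j-1) n|
            ≤ |x (j+1) n - x j n| + |x j n - x (j-1) n| := abs_sub_le _ _ _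
          _ ≤ 3 ^ n * δ + 3 ^ n * δ := by
              refine add_le_add ?_ ?_
              · rw [abs_sub_comm]; exact hb
              · rw [abs_sub_comm]; exact ha
      nlinarith [abs_nonneg (x (j+1) n - x (j-1) n)]
    calc |x i (n+1) - x (i+1) (n+1)|
        ≤ |x i (n+1) - x i n| + |x i n - x (i+1) n| + |x (i+1) n - x (i+1) (n+1)| := by
          have := abs_sub_le (x i (n+1)) (x i n) (x (i+1) (n+1))
          have := abs_sub_le (x i n) (x (i+1) n) (x (i+1) (n+1))
          linarith
      _ ≤ 3 ^ n * δ + 3 ^ n * δ + 3 ^ n * δ := by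
          refine add_le_add (add_le_add (hstep i) (ih i)) ?_
          rw [abs_sub_comm]; exact hstep (i+1)
      _ = 3 ^ (n+1) * δ := by ring

private lemma step_bound (x : ℤ → ℕ → ℝ) (δ : ℝ)
    (hcfl : ∀ i n, |x i (n+1) - x i n| ≤ 1/2 * |x (i+1) n - x (i-1) n|)
    (h0 : ∀ i, |x i 0 - x (i+1) 0| ≤ δ) :
    ∀ n i, |x i (n+1) - x i n| ≤ 3 ^ n * δ := by
  intro n i
  have h1 := hcfl i n
  have ha := osc_bound x δ hcfl h0 n (i-1)
  have hb := osc_bound x δ hcfl h0 n i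
  rw [sub_add_cancel] at ha
  have h2 : |x (i+1) n - x (i-1) n| ≤ 3 ^ n * δ + 3 ^ n * δ := by
    calc |x (i+1) n - x (i-1) n|
        ≤ |x (i+1) n - x i n| + |x i n - x (i-1) n| := abs_sub_le _ _ _
      _ ≤ 3 ^ n * δ + 3 ^ n * δ := by
          refine add_le_add ?_ ?_
          · rw [abs_sub_comm]; exact hb
          · rw [abs_sub_comm]; exact ha
  nlinarith [abs_nonneg (x (i+1) n - x (i-1) n)]

private lemma tele_bound (x : ℤ → ℕ → ℝ) (δ : ℝ)
    (hcfl : ∀ i n, |x i (n+1) - x i n| ≤ 1/2 * |x (i+1) n - x (i-1) n|)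
    (h0 : ∀ i, |x i 0 - x (i+1) 0| ≤ δ) :
    ∀ n i, |x i n - x i 0| ≤ (3 ^ n - 1) / 2 * δ := by
  intro n
  induction n with
  | zero => intro i; simp
  | succ n ih =>
    intro i
    calc |x i (n+1) - x i 0|
        ≤ |x i (n+1) - x i n| + |x i n - x i 0| := abs_sub_le _ _ _
      _ ≤ 3 ^ n * δ + (3 ^ n - 1) / 2 * δ :=
          add_le_add (step_bound x δ hcfl h0 n i) (ih i)
      _ = (3 ^ (n+1) - 1) / 2 * δ := by ring

private lemma init_spread (u : ℤ → ℕ → ℝ) (δ : ℝ)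
    (h0 : ∀ i, |u i 0 - u (i+1) 0| ≤ δ) :
    ∀ (m : ℕ) (i : ℤ), |u i 0 - u (i + m) 0| ≤ m * δ := by
  intro m
  induction m with
  | zero => intro i; simp
  | succ m ih =>
    intro i
    calc |u i 0 - u (i + (m+1 : ℕ)) 0|
        ≤ |u i 0 - u (i + m) 0| + |u (i + m) 0 - u (i + (m+1 : ℕ)) 0| := by
          have := abs_sub_le (u i 0) (u (i + m) 0) (u (i + (m+1 : ℕ)) 0)
          linarith
      _ ≤ m * δ + δ := by
          refine add_le_add (ih i) ?_
          have := h0 (i + m)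
          have heq : i + ((m : ℤ) + 1) = i + m + 1 := by ring
          push_cast
          rw [heq]
          exact this
      _ = (m + 1 : ℕ) * δ := by push_cast; ring

theorem coarse_fine_endpoint_bound (ε : ℝ) (hε : 0 < ε) (r N M : ℕ)
    (hr : 1 < r) (hN : 1 < N) (hM : M = N * r)
    (w u : ℤ → ℕ → ℝ)
    (hw0 : ∀ j : ℤ, w j 0 = u (j * r) 0)
    (hwcfl : ∀ j n, |w j (n+1) - w j n| ≤ 1/2 * |w (j+1) n - w (j-1) n|)
    (hucfl : ∀ i n, |u i (n+1) - u i n| ≤ 1/2 * |u (i+1) n - u (i-1) n|)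
    (h0 : ∀ i, |u i 0 - u (i+1) 0| ≤ ε / 3 ^ M) :
    ∀ j : ℤ, |w j N - u (j * r) M| ≤ ε := by
  intro j
  set δ : ℝ := ε / 3 ^ M with hδ
  have hδpos : 0 < δ := div_pos hε (by positivity)
  -- initial coarse-grid neighbor bound
  have hw0osc : ∀ j : ℤ, |w j 0 - w (j+1) 0| ≤ (r : ℝ) * δ := by
    intro j
    rw [hw0 j, hw0 (j+1)]
    have := init_spread u δ h0 r (j * r)
    have heq : j * (r : ℤ) + (r : ℕ) = (j + 1) * r := by ring
    rwa [heq] at this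
  have hwtele := tele_bound w ((r : ℝ) * δ) hwcfl hw0osc N j
  have hutele := tele_bound u δ hucfl h0 M (j * r)
  -- key numeric bound: r * 3 ^ N ≤ 3 ^ M
  have hkey : (r : ℝ) * 3 ^ N ≤ 3 ^ M := by
    obtain ⟨s, rfl⟩ : ∃ s, r = s + 1 := ⟨r - 1, by omega⟩
    have h1 : s + 1 ≤ 3 ^ (N * s) := by
      calc s + 1 ≤ 3 ^ (s + 1) := (Nat.lt_pow_self (n := s+1) (by norm_num)).le
        _ ≤ 3 ^ (N * s) := by
            apply Nat.pow_le_pow_right (by norm_num)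
            have hs : 1 ≤ s := by omega
            have : 2 * s ≤ N * s := Nat.mul_le_mul_right _ hN
            omega
    have h2 : (s + 1) * 3 ^ N ≤ 3 ^ (N * s) * 3 ^ N :=
      Nat.mul_le_mul_right _ h1
    have h3 : 3 ^ (N * s) * 3 ^ N = 3 ^ M := by
      rw [← pow_add, hM]; ring_nf
    have : (s + 1) * 3 ^ N ≤ 3 ^ M := by rw [← h3]; exact h2
    exact_mod_cast this
  have h3M : (0 : ℝ) < 3 ^ M := by positivity
  have hεM : 0 ≤ ε / 3 ^ M := le_of_lt (div_pos hε h3M)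
  have hcancel : (3 : ℝ) ^ M * (ε / 3 ^ M) = ε := mul_div_cancel₀ ε (ne_of_gt h3M)
  have hwb : |w j N - w j 0| ≤ ε / 2 := by
    have hrnn : (0 : ℝ) ≤ r := by positivity
    have hh : (3 ^ N - 1 : ℝ) * r ≤ 3 ^ M := by nlinarith
    have hmul := mul_le_mul_of_nonneg_right hh hεM
    have heq : (3 ^ N - 1 : ℝ) / 2 * ((r : ℝ) * δ) = (3 ^ N - 1 : ℝ) * r * (ε / 3 ^ M) / 2 := by
      rw [hδ]; ring
    rw [heq] at hwtele
    linarith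
  have hub : |u (j * r) M - u (j * r) 0| ≤ ε / 2 := by
    have hh : (3 ^ M - 1 : ℝ) ≤ 3 ^ M := by linarith
    have hmul := mul_le_mul_of_nonneg_right hh hεM
    have heq : (3 ^ M - 1 : ℝ) / 2 * δ = (3 ^ M - 1 : ℝ) * (ε / 3 ^ M) / 2 := by
      rw [hδ]; ring
    rw [heq] at hutele
    linarith
  calc |w j N - u (j * r) M|
      ≤ |w j N - w j 0| + |w j 0 - u (j * r) M| := abs_sub_le _ _ _
    _ = |w j N - w j 0| + |u (j * r) M - u (j * r) 0| := by
        rw [hw0 j, abs_sub_comm (u (j * r) 0)]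
    _ ≤ ε / 2 + ε / 2 := add_le_add hwb hub
    _ = ε := by ring
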